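/- Let (X,·) be a finite indecomposable cycle set whose permutation group 𝒢(X) is cyclic. Then for every x ∈ X the cyclic subgroup generated by σ_x equals 𝒢(X). -/

import Mathlib

structure CycleSet (X : Type*) where
  mul : X → X → X
  mul_bijective : ∀ x, Function.Bijective (mul x)
  cycloid : ∀ x y z, mul (mul x y) (mul x z) = mul (mul y x) (mul y z)
  nondeg : Function.Bijective (fun x => mul x x)

namespace CycleSet

variable {X : Type*}

/-- The left multiplication `σ_x` as a permutation of `X`. -/
noncomputable def sigma (C : CycleSet X) (x : X) : Equiv.Perm X :=
  Equiv.ofBijective (C.mul x) (C.mul_bijective x)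

/-- The permutation group `𝒢(X)` of a cycle set. -/
noncomputable def G (C : CycleSet X) : Subgroup (Equiv.Perm X) :=
  Subgroup.closure (Set.range C.sigma)

/-- A cycle set is indecomposable if `𝒢(X)` acts transitively on `X`. -/
def Indecomposable (C : CycleSet X) : Prop := ∀ x y : X, ∃ g ∈ C.G, g x = y

/-- A cycle set is uniconnected if `𝒢(X)` acts regularly on `X`. -/
def Uniconnected (C : CycleSet X) : Prop :=
  ∀ x y : X, ∃! g : Equiv.Perm X, g ∈ C.G ∧ g x = y

/-- `MPLrel C n a b` holds iff `a`, `b` have the same image in the `n`-th iterated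
retraction `Ret^n(X)`. -/
def MPLrel (C : CycleSet X) : ℕ → X → X → Prop
  | 0 => Eq
  | n + 1 => fun a b => ∀ z, MPLrel C n (C.mul a z) (C.mul b z)

/-- A cycle set has multipermutation level `n` if `n` is minimal with `|Ret^n(X)| = 1`. -/
def MPL (C : CycleSet X) (n : ℕ) : Prop :=
  (∀ a b, MPLrel C n a b) ∧ ∀ m < n, ∃ a b, ¬ MPLrel C m a b

end CycleSet

/-- `𝒜` is the system of blocks generated by a block `B` for the subgroup `G` of `Sym(Z)`. -/
def IsBlockSystem {Z : Type*} (G : Subgroup (Equiv.Perm Z)) (𝒜 : Set (Set Z)) : Prop :=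
  ∃ B : Set Z, B.Nonempty ∧
    (∀ g ∈ G, (⇑g) '' B = B ∨ Disjoint ((⇑g) '' B) B) ∧
    𝒜 = {A | ∃ g ∈ G, A = (⇑g) '' B}

/-- Two systems of blocks are orthogonal if any two members meet in exactly one point. -/
def OrthSystems {Z : Type*} (𝒜 ℬ : Set (Set Z)) : Prop :=
  ∀ A ∈ 𝒜, ∀ B ∈ ℬ, ∃ z, A ∩ B = {z}

/-- The system of blocks `𝓑_X = {{x} × S : x ∈ X}` on `X × S`. -/
def BXblocks (X S : Type*) : Set (Set (X × S)) :=
  {B | ∃ x : X, B = {p : X × S | p.1 = x}}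

/-- The system of blocks `{X × {s} : s ∈ S}` on `X × S`. -/
def SBlocks (X S : Type*) : Set (Set (X × S)) :=
  {B | ∃ s : S, B = {p : X × S | p.2 = s}}

/-- The system of blocks formed by the classes of the retract relation. -/
def RetBlocks {X : Type*} (C : CycleSet X) : Set (Set X) :=
  {B | ∃ x : X, B = {y : X | ∀ z, C.mul y z = C.mul x z}}

namespace Stmt1Aux


open AddSubgroup

/-- Cycle-set condition transported to `ZMod n`. -/
def Scond (n : ℕ) (f : ZMod n → ZMod n) : Prop :=
  ∀ x y, f (y + f x) + f x = f (x + f y) + f y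

/-- The values of `f` generate `ZMod n`. -/
def Gencond (n : ℕ) (f : ZMod n → ZMod n) : Prop :=
  AddSubgroup.closure (Set.range f) = ⊤

variable {n : ℕ}

section basic
variable [NeZero n]

lemma nsmul_mem_aux {s : Set (ZMod n)} (h0 : (0 : ZMod n) ∈ s)
    (hadd : ∀ a ∈ s, ∀ b ∈ s, a + b ∈ s) {u : ZMod n} (hu : u ∈ s) :
    ∀ j : ℕ, j • u ∈ s := by
  intro j
  induction j with
  | zero => simpa using h0
  | succ j ih => rw [succ_nsmul]; exact hadd _ ih _ hu

lemma neg_mem_aux {s : Set (ZMod n)} (h0 : (0 : ZMod n) ∈ s)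
    (hadd : ∀ a ∈ s, ∀ b ∈ s, a + b ∈ s) {u : ZMod n} (hu : u ∈ s) : -u ∈ s := by
  have hpos : 0 < addOrderOf u := addOrderOf_pos u
  have h1 : (addOrderOf u - 1) • u + u = 0 := by
    rw [← succ_nsmul]
    have he : addOrderOf u - 1 + 1 = addOrderOf u := by omega
    rw [he]
    exact addOrderOf_nsmul_eq_zero u
  have h2 : (addOrderOf u - 1) • u = -u := eq_neg_of_add_eq_zero_left h1
  exact h2 ▸ nsmul_mem_aux h0 hadd hu _

/-- Build an additive subgroup from a `0`- and `+`-closed set (finiteness gives inverses). -/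
def mkSub (s : Set (ZMod n)) (h0 : (0 : ZMod n) ∈ s)
    (hadd : ∀ a ∈ s, ∀ b ∈ s, a + b ∈ s) : AddSubgroup (ZMod n) where
  carrier := s
  zero_mem' := h0
  add_mem' := fun ha hb => hadd _ ha _ hb
  neg_mem' := fun ha => neg_mem_aux h0 hadd ha

lemma mkSub_eq_top {s : Set (ZMod n)} (h0 : (0 : ZMod n) ∈ s)
    (hadd : ∀ a ∈ s, ∀ b ∈ s, a + b ∈ s) {f : ZMod n → ZMod n}
    (hgen : Gencond n f) (hr : Set.range f ⊆ s) : ∀ u : ZMod n, u ∈ s := by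
  intro u
  have hu : u ∈ AddSubgroup.closure (Set.range f) := hgen ▸ AddSubgroup.mem_top u
  exact (AddSubgroup.closure_le (mkSub s h0 hadd)).mpr hr hu

lemma shift_indep {f : ZMod n → ZMod n} (hS : Scond n f) (hgen : Gencond n f) :
    ∀ u a b : ZMod n, f a = f b → f (a + u) = f (b + u) := by
  have h0 : (0 : ZMod n) ∈ {u : ZMod n | ∀ a b : ZMod n, f a = f b → f (a + u) = f (b + u)} :=
    fun a b hab => by simpa using hab
  have hadd : ∀ u ∈ {u : ZMod n | ∀ a b : ZMod n, f a = f b → f (a + u) = f (b + u)},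
      ∀ v ∈ {u : ZMod n | ∀ a b : ZMod n, f a = f b → f (a + u) = f (b + u)},
      u + v ∈ {u : ZMod n | ∀ a b : ZMod n, f a = f b → f (a + u) = f (b + u)} := by
    intro u hu v hv a b hab
    rw [← add_assoc, ← add_assoc]
    exact hv _ _ (hu _ _ hab)
  have hr : Set.range f ⊆ {u : ZMod n | ∀ a b : ZMod n, f a = f b → f (a + u) = f (b + u)} := by
    rintro _ ⟨z, rfl⟩ a b hab
    have h1 := hS z a
    have h2 := hS z b
    rw [hab] at h1
    exact add_right_cancel (h1.trans h2.symm)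
  exact mkSub_eq_top h0 hadd hgen hr

/-- The subgroup of periods of `f`. -/
def Wsub (f : ZMod n → ZMod n) : AddSubgroup (ZMod n) where
  carrier := {w | ∀ x, f (x + w) = f x}
  zero_mem' := fun x => by simp
  add_mem' := by
    intro a b ha hb x
    rw [← add_assoc, hb (x + a), ha x]
  neg_mem' := by
    intro a ha x
    have h := ha (x + -a)
    simp only [add_assoc, neg_add_cancel, add_zero] at h
    exact h.symm

lemma mem_Wsub {f : ZMod n → ZMod n} {w : ZMod n} :
    w ∈ Wsub f ↔ ∀ x, f (x + w) = f x := Iff.rfl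

lemma sub_mem_Wsub {f : ZMod n → ZMod n} (hS : Scond n f) (hgen : Gencond n f)
    {x y : ZMod n} (h : f x = f y) : y - x ∈ Wsub f := by
  rw [mem_Wsub]
  intro z
  have h1 := shift_indep hS hgen (z - x) x y h
  have e1 : x + (z - x) = z := by ring
  have e2 : y + (z - x) = z + (y - x) := by ring
  rw [e1, e2] at h1
  exact h1.symm

lemma zero_not_mem_range {f : ZMod n → ZMod n} (hS : Scond n f) (hgen : Gencond n f)
    (hn : n ≠ 1) : ∀ y, f y ≠ 0 := by
  intro y hy
  have key : ∀ u : ZMod n, u ∈ {u : ZMod n | ∀ a, f a = 0 → f (a + u) = 0} := by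
    apply mkSub_eq_top (f := f)
    · intro a ha; simpa using ha
    · intro u hu v hv a ha
      rw [← add_assoc]
      exact hv _ (hu _ ha)
    · exact hgen
    · rintro _ ⟨z, rfl⟩ a ha
      have h1 := hS z a
      rw [ha] at h1
      simp only [add_zero] at h1
      have h1' : f (a + f z) + f z = f z := h1
      exact add_eq_right.mp h1'
  have hall : ∀ v : ZMod n, f v = 0 := by
    intro v
    have h := key (v - y) y hy
    have e : y + (v - y) = v := by ring
    rwa [e] at h
  have h1 : (1 : ZMod n) ∈ AddSubgroup.closure (Set.range f) := hgen ▸ AddSubgroup.mem_top _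
  have h2 : (1 : ZMod n) ∈ AddSubgroup.closure ({0} : Set (ZMod n)) :=
    AddSubgroup.closure_mono (by rintro _ ⟨v, rfl⟩; simp [hall v]) h1
  rw [AddSubgroup.closure_singleton_zero, AddSubgroup.mem_bot] at h2
  have : (1 : ℕ) < n := by
    have := NeZero.ne n
    omega
  haveI : Fact (1 < n) := ⟨this⟩
  exact one_ne_zero h2

lemma exists_period {f : ZMod n → ZMod n} (hS : Scond n f) (hgen : Gencond n f)
    (hn : n ≠ 1) : ∃ w : ZMod n, w ≠ 0 ∧ w ∈ Wsub f := by
  by_cases hinj : Function.Injective f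
  · exfalso
    obtain ⟨y, hy⟩ := Finite.injective_iff_surjective.mp hinj 0
    exact zero_not_mem_range hS hgen hn y hy
  · obtain ⟨a, b, hab, hne⟩ := Function.not_injective_iff.mp hinj
    exact ⟨b - a, sub_ne_zero.mpr (Ne.symm hne), sub_mem_Wsub hS hgen hab⟩

lemma W_card_dvd {f : ZMod n → ZMod n} : Nat.card (Wsub f) ∣ n := by
  have h := AddSubgroup.card_addSubgroup_dvd_card (Wsub f)
  rwa [Nat.card_zmod] at h

lemma dvd_val_of_mem_W {f : ZMod n → ZMod n} {w : ZMod n} (hw : w ∈ Wsub f) :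
    (n / Nat.card (Wsub f)) ∣ w.val := by
  have hd : Nat.card (Wsub f) ∣ n := W_card_dvd
  have h2 : addOrderOf (⟨w, hw⟩ : Wsub f) ∣ Nat.card (Wsub f) := addOrderOf_dvd_natCard _
  have h3 : (Nat.card (Wsub f)) • (⟨w, hw⟩ : Wsub f) = 0 :=
    addOrderOf_dvd_iff_nsmul_eq_zero.mp h2
  have h1 : (Nat.card (Wsub f)) • w = 0 := by
    have h := congrArg (Subtype.val) h3
    rwa [AddSubmonoidClass.coe_nsmul, ZeroMemClass.coe_zero] at h
  have hw' : ((w.val : ℕ) : ZMod n) = w := ZMod.natCast_rightInverse w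
  have h4 : ((Nat.card (Wsub f) * w.val : ℕ) : ZMod n) = 0 := by
    rw [Nat.cast_mul, hw', ← nsmul_eq_mul, h1]
  have h5 : n ∣ Nat.card (Wsub f) * w.val := (ZMod.natCast_eq_zero_iff _ _).mp h4
  obtain ⟨k, hk⟩ := h5
  refine ⟨k, ?_⟩
  have hdpos : 0 < Nat.card (Wsub f) := Nat.card_pos
  apply Nat.eq_of_mul_eq_mul_left hdpos
  rw [hk, ← mul_assoc, Nat.mul_div_cancel' hd]

lemma mem_W_of_dvd_val {f : ZMod n → ZMod n} (hS : Scond n f) (hgen : Gencond n f)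
    {x : ZMod n} (hx : (n / Nat.card (Wsub f)) ∣ x.val) : x ∈ Wsub f := by
  set d := Nat.card (Wsub f) with hd_def
  set m := n / d with hm_def
  have hd : d ∣ n := W_card_dvd
  have hdpos : 0 < d := Nat.card_pos
  have hnpos : 0 < n := Nat.pos_of_ne_zero (NeZero.ne n)
  have hmd : m * d = n := Nat.div_mul_cancel hd
  have hmpos : 0 < m := by
    rcases Nat.eq_zero_or_pos m with h | h
    · exfalso; rw [h, zero_mul] at hmd; omega
    · exact h
  have hKcard : Nat.card {z : ZMod n | m ∣ z.val} = d := by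
    have e : {z : ZMod n | m ∣ z.val} ≃ Fin d :=
      { toFun := fun z => ⟨z.1.val / m, by
          have hlt : z.1.val < n := ZMod.val_lt z.1
          rw [Nat.div_lt_iff_lt_mul hmpos]
          have h2 : d * m = n := by rw [mul_comm]; exact hmd
          omega⟩
        invFun := fun j => ⟨((m * j.1 : ℕ) : ZMod n), by
          have hlt : m * j.1 < n := by
            calc m * j.1 < m * d := by exact mul_lt_mul_of_pos_left j.2 hmpos
            _ = n := hmd
          show m ∣ (((m * j.1 : ℕ) : ZMod n)).val
          rw [ZMod.val_cast_of_lt hlt]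
          exact Dvd.intro _ rfl⟩
        left_inv := by
          intro z
          apply Subtype.ext
          have h1 : m * (z.1.val / m) = z.1.val := Nat.mul_div_cancel' z.2
          show ((m * (z.1.val / m) : ℕ) : ZMod n) = z.1
          rw [h1]
          exact ZMod.natCast_rightInverse z.1
        right_inv := by
          intro j
          apply Fin.ext
          have hlt : m * j.1 < n := by
            calc m * j.1 < m * d := by exact mul_lt_mul_of_pos_left j.2 hmpos
            _ = n := hmd
          show (((m * j.1 : ℕ) : ZMod n)).val / m = j.1
          rw [ZMod.val_cast_of_lt hlt]
          exact Nat.mul_div_cancel_left _ hmpos }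
    rw [Nat.card_congr e, Nat.card_eq_fintype_card, Fintype.card_fin]
  have hWK : (Wsub f : Set (ZMod n)) ⊆ {z : ZMod n | m ∣ z.val} := fun w hw =>
    dvd_val_of_mem_W hw
  have hWcard : ((Wsub f : Set (ZMod n))).ncard = d := by
    rw [← Nat.card_coe_set_eq]; rfl
  have hseq : (Wsub f : Set (ZMod n)) = {z : ZMod n | m ∣ z.val} := by
    apply Set.eq_of_subset_of_ncard_le hWK
    rw [hWcard, ← Nat.card_coe_set_eq, hKcard]
  have hxK : x ∈ {z : ZMod n | m ∣ z.val} := hx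
  rw [← hseq] at hxK
  exact hxK

end basic

section quot

variable {m : ℕ}

lemma castHom_zero_iff [NeZero n] [NeZero m] (hm : m ∣ n) (z : ZMod n) :
    ZMod.castHom hm (ZMod m) z = 0 ↔ m ∣ z.val := by
  have hz : ((z.val : ℕ) : ZMod n) = z := ZMod.natCast_rightInverse z
  have h2 : ZMod.castHom hm (ZMod m) z = ((z.val : ℕ) : ZMod m) := by
    conv_lhs => rw [← hz]
    rw [map_natCast]
  rw [h2, ZMod.natCast_eq_zero_iff]

lemma castHom_lift [NeZero n] [NeZero m] (hm : m ∣ n) (z : ZMod m) :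
    ZMod.castHom hm (ZMod m) ((z.val : ZMod n)) = z := by
  rw [map_natCast]
  exact ZMod.natCast_rightInverse z

variable {f : ZMod n → ZMod n}

lemma f_factor [NeZero n] [NeZero m] (hm : m ∣ n)
    (hker : ∀ x : ZMod n, m ∣ x.val → x ∈ Wsub f)
    {x y : ZMod n} (hxy : ZMod.castHom hm (ZMod m) x = ZMod.castHom hm (ZMod m) y) :
    f x = f y := by
  have h1 : ZMod.castHom hm (ZMod m) (y - x) = 0 := by rw [map_sub, hxy, sub_self]
  have h2 : y - x ∈ Wsub f := hker _ ((castHom_zero_iff hm _).mp h1)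
  have h3 := (mem_Wsub.mp h2) x
  have e : x + (y - x) = y := by ring
  rw [e] at h3
  exact h3.symm

/-- Quotient map of the system to `ZMod m`. -/
def qmap (f : ZMod n → ZMod n) (hm : m ∣ n) : ZMod m → ZMod m :=
  fun z => ZMod.castHom hm (ZMod m) (f ((z.val : ZMod n)))

lemma qmap_comm [NeZero n] [NeZero m] (hm : m ∣ n)
    (hker : ∀ x : ZMod n, m ∣ x.val → x ∈ Wsub f) (x : ZMod n) :
    qmap f hm (ZMod.castHom hm (ZMod m) x) = ZMod.castHom hm (ZMod m) (f x) := by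
  unfold qmap
  congr 1
  exact f_factor hm hker (castHom_lift hm _)

lemma qmap_S [NeZero n] [NeZero m] (hS : Scond n f) (hm : m ∣ n)
    (hker : ∀ x : ZMod n, m ∣ x.val → x ∈ Wsub f) : Scond m (qmap f hm) := by
  intro a b
  obtain ⟨x, rfl⟩ : ∃ x : ZMod n, ZMod.castHom hm (ZMod m) x = a :=
    ⟨(a.val : ZMod n), castHom_lift hm a⟩
  obtain ⟨y, rfl⟩ : ∃ y : ZMod n, ZMod.castHom hm (ZMod m) y = b :=
    ⟨(b.val : ZMod n), castHom_lift hm b⟩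
  rw [qmap_comm hm hker x, qmap_comm hm hker y, ← map_add, ← map_add,
    qmap_comm hm hker, qmap_comm hm hker, ← map_add, ← map_add]
  exact congrArg _ (hS x y)

lemma qmap_gen [NeZero n] [NeZero m] (hgen : Gencond n f) (hm : m ∣ n)
    (hker : ∀ x : ZMod n, m ∣ x.val → x ∈ Wsub f) : Gencond m (qmap f hm) := by
  have hsurj : Function.Surjective (ZMod.castHom hm (ZMod m)) := fun z =>
    ⟨(z.val : ZMod n), castHom_lift hm z⟩
  have hrange : Set.range (qmap f hm) = (ZMod.castHom hm (ZMod m)) '' (Set.range f) := by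
    ext z
    constructor
    · rintro ⟨w, rfl⟩
      exact ⟨f ((w.val : ZMod n)), Set.mem_range_self _, rfl⟩
    · rintro ⟨-, ⟨x, rfl⟩, rfl⟩
      exact ⟨ZMod.castHom hm (ZMod m) x, qmap_comm hm hker x⟩
  unfold Gencond
  rw [hrange]
  have h1 : (ZMod.castHom hm (ZMod m)) '' (Set.range f)
      = (ZMod.castHom hm (ZMod m)).toAddMonoidHom '' (Set.range f) := rfl
  rw [h1, ← AddMonoidHom.map_closure, hgen]
  exact AddSubgroup.map_top_of_surjective _ hsurj

end quot

theorem lemD : ∀ m : ℕ, m ≠ 0 → ∀ p : ℕ, p.Prime → ¬ (p ∣ m) →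
    ∀ t : ZMod m → ZMod m, Scond m t → Gencond m t →
    ∀ φ : ZMod m → ZMod p, (∀ x y, φ (y + t x) + φ x = φ (x + t y) + φ y) →
    ∀ x y, φ x = φ y := by
  intro m
  induction m using Nat.strong_induction_on with
  | _ m ih =>
  intro hm0 p hp hpm t hSt hGt φ hSφ x y
  haveI : NeZero m := ⟨hm0⟩
  by_cases hm1 : m = 1
  · subst hm1
    exact congrArg φ (Subsingleton.elim x y)
  -- the joint shift lemma
  have key : ∀ u a b : ZMod m, t a = t b →
      t (a + u) = t (b + u) ∧ φ (a + u) - φ a = φ (b + u) - φ b := by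
    have h0 : (0 : ZMod m) ∈ {u : ZMod m | ∀ a b : ZMod m, t a = t b →
        t (a + u) = t (b + u) ∧ φ (a + u) - φ a = φ (b + u) - φ b} := by
      intro a b hab
      simp only [add_zero]
      exact ⟨hab, by ring⟩
    have hadd : ∀ u ∈ {u : ZMod m | ∀ a b : ZMod m, t a = t b →
        t (a + u) = t (b + u) ∧ φ (a + u) - φ a = φ (b + u) - φ b},
        ∀ v ∈ {u : ZMod m | ∀ a b : ZMod m, t a = t b →
        t (a + u) = t (b + u) ∧ φ (a + u) - φ a = φ (b + u) - φ b},
        u + v ∈ {u : ZMod m | ∀ a b : ZMod m, t a = t b →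
        t (a + u) = t (b + u) ∧ φ (a + u) - φ a = φ (b + u) - φ b} := by
      intro u hu v hv a b hab
      have h1 := hu a b hab
      have h2 := hv (a + u) (b + u) h1.1
      constructor
      · rw [← add_assoc, ← add_assoc]
        exact h2.1
      · have e1 : a + (u + v) = a + u + v := by ring
        have e2 : b + (u + v) = b + u + v := by ring
        rw [e1, e2]
        linear_combination h2.2 + h1.2
    have hr : Set.range t ⊆ {u : ZMod m | ∀ a b : ZMod m, t a = t b →
        t (a + u) = t (b + u) ∧ φ (a + u) - φ a = φ (b + u) - φ b} := by
      rintro _ ⟨z, rfl⟩ a b hab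
      have h1 := hSt z a
      have h2 := hSt z b
      have g1 := hSφ z a
      have g2 := hSφ z b
      rw [hab] at h1 g1
      constructor
      · exact add_right_cancel (h1.trans h2.symm)
      · linear_combination g1 - g2
    exact mkSub_eq_top h0 hadd hGt hr
  -- invariance of φ under periods of t
  have L1 : ∀ w ∈ Wsub t, ∀ z : ZMod m, φ (z + w) = φ z := by
    intro w hw z
    have hWt : ∀ j : ℕ, t (z + j • w) = t z := fun j =>
      (mem_Wsub.mp (AddSubgroup.nsmul_mem _ hw j)) z
    have tele : ∀ j : ℕ, φ (z + j • w) - φ z = j • (φ (z + w) - φ z) := by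
      intro j
      induction j with
      | zero => simp
      | succ j ihj =>
        have hk := (key w (z + j • w) z (hWt j)).2
        have e1 : z + (j + 1) • w = z + j • w + w := by rw [succ_nsmul]; ring
        rw [e1, succ_nsmul]
        linear_combination hk + ihj
    have hord : addOrderOf w ∣ m := by
      have h := addOrderOf_dvd_natCard w
      rwa [Nat.card_zmod] at h
    have h0 : (addOrderOf w) • (φ (z + w) - φ z) = 0 := by
      have h := tele (addOrderOf w)
      rw [addOrderOf_nsmul_eq_zero w, add_zero, sub_self] at h
      exact h.symm
    haveI := Fact.mk hp
    have hkp : ¬ p ∣ addOrderOf w := fun hdd => hpm (hdd.trans hord)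
    have hcast : ((addOrderOf w : ℕ) : ZMod p) ≠ 0 := by
      rw [Ne, ZMod.natCast_eq_zero_iff]
      exact hkp
    rw [nsmul_eq_mul] at h0
    have hc0 := (mul_eq_zero.mp h0).resolve_left hcast
    have := sub_eq_zero.mp hc0
    exact this
  -- quotient by the period subgroup
  obtain ⟨w0, hw0ne, hw0⟩ := exists_period hSt hGt hm1
  have hdvd : Nat.card (Wsub t) ∣ m := W_card_dvd
  have hd1 : 1 < Nat.card (Wsub t) := by
    rw [Finite.one_lt_card_iff_nontrivial]
    exact ⟨⟨⟨w0, hw0⟩, ⟨0, (Wsub t).zero_mem⟩, by simp [Subtype.ext_iff, hw0ne]⟩⟩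
  have hm'dvd : m / Nat.card (Wsub t) ∣ m := Nat.div_dvd_of_dvd hdvd
  have hm'lt : m / Nat.card (Wsub t) < m := Nat.div_lt_self (Nat.pos_of_ne_zero hm0) hd1
  have hm'0 : m / Nat.card (Wsub t) ≠ 0 := by
    have h := Nat.div_mul_cancel hdvd
    intro hz
    rw [hz, zero_mul] at h
    exact hm0 h.symm
  haveI : NeZero (m / Nat.card (Wsub t)) := ⟨hm'0⟩
  have hker : ∀ z : ZMod m, (m / Nat.card (Wsub t)) ∣ z.val → z ∈ Wsub t := fun z hz =>
    mem_W_of_dvd_val hSt hGt hz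
  have ht'S : Scond (m / Nat.card (Wsub t)) (qmap t hm'dvd) := qmap_S hSt hm'dvd hker
  have ht'G : Gencond (m / Nat.card (Wsub t)) (qmap t hm'dvd) := qmap_gen hGt hm'dvd hker
  have hφ'comm : ∀ z : ZMod m,
      φ (((ZMod.castHom hm'dvd (ZMod (m / Nat.card (Wsub t))) z).val : ZMod m)) = φ z := by
    intro z
    have h1 := castHom_lift hm'dvd (ZMod.castHom hm'dvd (ZMod (m / Nat.card (Wsub t))) z)
    have h2 : ZMod.castHom hm'dvd (ZMod (m / Nat.card (Wsub t)))
        ((((ZMod.castHom hm'dvd (ZMod (m / Nat.card (Wsub t))) z).val : ZMod m)) - z) = 0 := by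
      rw [map_sub, h1, sub_self]
    have h3 := hker _ ((castHom_zero_iff hm'dvd _).mp h2)
    have h4 := L1 _ h3 z
    have e : z + ((((ZMod.castHom hm'dvd (ZMod (m / Nat.card (Wsub t))) z).val : ZMod m)) - z)
        = (((ZMod.castHom hm'dvd (ZMod (m / Nat.card (Wsub t))) z).val : ZMod m)) := by ring
    rw [e] at h4
    exact h4
  have hSφ' : ∀ a b : ZMod (m / Nat.card (Wsub t)),
      (fun zz : ZMod (m / Nat.card (Wsub t)) => φ ((zz.val : ZMod m))) (b + (qmap t hm'dvd) a)
        + (fun zz : ZMod (m / Nat.card (Wsub t)) => φ ((zz.val : ZMod m))) a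
      = (fun zz : ZMod (m / Nat.card (Wsub t)) => φ ((zz.val : ZMod m))) (a + (qmap t hm'dvd) b)
        + (fun zz : ZMod (m / Nat.card (Wsub t)) => φ ((zz.val : ZMod m))) b := by
    intro a b
    obtain ⟨x', rfl⟩ : ∃ x', ZMod.castHom hm'dvd (ZMod (m / Nat.card (Wsub t))) x' = a :=
      ⟨(a.val : ZMod m), castHom_lift hm'dvd a⟩
    obtain ⟨y', rfl⟩ : ∃ y', ZMod.castHom hm'dvd (ZMod (m / Nat.card (Wsub t))) y' = b :=
      ⟨(b.val : ZMod m), castHom_lift hm'dvd b⟩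
    simp only
    rw [qmap_comm hm'dvd hker x', qmap_comm hm'dvd hker y', ← map_add, ← map_add,
      hφ'comm, hφ'comm, hφ'comm, hφ'comm]
    exact hSφ x' y'
  have hp' : ¬ p ∣ (m / Nat.card (Wsub t)) := fun h => hpm (h.trans hm'dvd)
  have hconst := ih (m / Nat.card (Wsub t)) hm'lt hm'0 p hp hp' (qmap t hm'dvd) ht'S ht'G
    (fun zz => φ ((zz.val : ZMod m))) hSφ'
    (ZMod.castHom hm'dvd (ZMod (m / Nat.card (Wsub t))) x)
    (ZMod.castHom hm'dvd (ZMod (m / Nat.card (Wsub t))) y)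
  rw [hφ'comm x, hφ'comm y] at hconst
  exact hconst

theorem core : ∀ n : ℕ, n ≠ 0 → ∀ f : ZMod n → ZMod n, Scond n f → Gencond n f →
    ∀ p : ℕ, p.Prime → ∀ hpn : p ∣ n, ∀ x y : ZMod n,
      ZMod.castHom hpn (ZMod p) (f x) = ZMod.castHom hpn (ZMod p) (f y) := by
  intro n
  induction n using Nat.strong_induction_on with
  | _ n ih =>
  intro hn0 f hS hgen p hp hpn x y
  haveI : NeZero n := ⟨hn0⟩
  have hn1 : n ≠ 1 := by
    rintro rfl
    exact hp.one_lt.ne' (Nat.dvd_one.mp hpn)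
  obtain ⟨w0, hw0ne, hw0⟩ := exists_period hS hgen hn1
  have hdvd : Nat.card (Wsub f) ∣ n := W_card_dvd
  have hd1 : 1 < Nat.card (Wsub f) := by
    rw [Finite.one_lt_card_iff_nontrivial]
    exact ⟨⟨⟨w0, hw0⟩, ⟨0, (Wsub f).zero_mem⟩, by simp [Subtype.ext_iff, hw0ne]⟩⟩
  have hn'dvd : n / Nat.card (Wsub f) ∣ n := Nat.div_dvd_of_dvd hdvd
  have hn'lt : n / Nat.card (Wsub f) < n := Nat.div_lt_self (Nat.pos_of_ne_zero hn0) hd1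
  have hn'0 : n / Nat.card (Wsub f) ≠ 0 := by
    have h := Nat.div_mul_cancel hdvd
    intro hz
    rw [hz, zero_mul] at h
    exact hn0 h.symm
  haveI : NeZero (n / Nat.card (Wsub f)) := ⟨hn'0⟩
  have hker : ∀ z : ZMod n, (n / Nat.card (Wsub f)) ∣ z.val → z ∈ Wsub f := fun z hz =>
    mem_W_of_dvd_val hS hgen hz
  by_cases hpn' : p ∣ n / Nat.card (Wsub f)
  · -- Case A : recurse on the quotient
    have hrec := ih (n / Nat.card (Wsub f)) hn'lt hn'0 (qmap f hn'dvd)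
      (qmap_S hS hn'dvd hker) (qmap_gen hgen hn'dvd hker) p hp hpn'
      (ZMod.castHom hn'dvd (ZMod (n / Nat.card (Wsub f))) x)
      (ZMod.castHom hn'dvd (ZMod (n / Nat.card (Wsub f))) y)
    rw [qmap_comm hn'dvd hker x, qmap_comm hn'dvd hker y] at hrec
    have trans1 : ∀ z : ZMod n, ZMod.castHom hpn (ZMod p) z
        = ZMod.castHom hpn' (ZMod p) (ZMod.castHom hn'dvd (ZMod (n / Nat.card (Wsub f))) z) := by
      intro z
      have hz : ((z.val : ℕ) : ZMod n) = z := ZMod.natCast_rightInverse z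
      conv_lhs => rw [← hz]
      conv_rhs => rw [← hz]
      rw [map_natCast, map_natCast, map_natCast]
    rw [trans1 (f x), trans1 (f y), hrec]
  · -- Case B : pass to the prime-to-p part and use lemD
    haveI := Fact.mk hp
    have hmn : ordCompl[p] n ∣ n := ⟨p ^ n.factorization p, by
      rw [mul_comm]; exact (Nat.ordProj_mul_ordCompl_eq_self n p).symm⟩
    have hpm : ¬ p ∣ ordCompl[p] n := Nat.not_dvd_ordCompl hp hn0
    have hm0 : ordCompl[p] n ≠ 0 := by
      intro h
      have h2 := Nat.ordProj_mul_ordCompl_eq_self n p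
      rw [h, mul_zero] at h2
      exact hn0 h2.symm
    haveI : NeZero (ordCompl[p] n) := ⟨hm0⟩
    have hcop : Nat.Coprime (n / Nat.card (Wsub f)) (p ^ n.factorization p) :=
      Nat.Coprime.pow_right _ (((Nat.Prime.coprime_iff_not_dvd hp).mpr hpn').symm)
    have hn'm : n / Nat.card (Wsub f) ∣ ordCompl[p] n := by
      have h2 : n / Nat.card (Wsub f) ∣ p ^ n.factorization p * ordCompl[p] n := by
        rw [Nat.ordProj_mul_ordCompl_eq_self n p]
        exact hn'dvd
      exact (Nat.Coprime.dvd_of_dvd_mul_left hcop h2)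
    have hkerm : ∀ z : ZMod n, (ordCompl[p] n) ∣ z.val → z ∈ Wsub f := fun z hz =>
      hker z (hn'm.trans hz)
    have htS : Scond (ordCompl[p] n) (qmap f hmn) := qmap_S hS hmn hkerm
    have htG : Gencond (ordCompl[p] n) (qmap f hmn) := qmap_gen hgen hmn hkerm
    have hφcomm : ∀ z : ZMod n,
        ZMod.castHom hpn (ZMod p)
          (f (((ZMod.castHom hmn (ZMod (ordCompl[p] n)) z).val : ZMod n)))
        = ZMod.castHom hpn (ZMod p) (f z) := by
      intro z
      congr 1
      exact f_factor hmn hkerm (castHom_lift hmn _)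
    have hSφ : ∀ a b : ZMod (ordCompl[p] n),
        (fun zz : ZMod (ordCompl[p] n) => ZMod.castHom hpn (ZMod p) (f ((zz.val : ZMod n))))
          (b + (qmap f hmn) a)
        + (fun zz : ZMod (ordCompl[p] n) => ZMod.castHom hpn (ZMod p) (f ((zz.val : ZMod n)))) a
        = (fun zz : ZMod (ordCompl[p] n) => ZMod.castHom hpn (ZMod p) (f ((zz.val : ZMod n))))
          (a + (qmap f hmn) b)
        + (fun zz : ZMod (ordCompl[p] n) => ZMod.castHom hpn (ZMod p) (f ((zz.val : ZMod n)))) b := by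
      intro a b
      obtain ⟨x', rfl⟩ : ∃ x', ZMod.castHom hmn (ZMod (ordCompl[p] n)) x' = a :=
        ⟨(a.val : ZMod n), castHom_lift hmn a⟩
      obtain ⟨y', rfl⟩ : ∃ y', ZMod.castHom hmn (ZMod (ordCompl[p] n)) y' = b :=
        ⟨(b.val : ZMod n), castHom_lift hmn b⟩
      have hφcomm2 : ∀ z w : ZMod n,
          ZMod.castHom hpn (ZMod p)
            (f (((ZMod.castHom hmn (ZMod (ordCompl[p] n)) z
              + ZMod.castHom hmn (ZMod (ordCompl[p] n)) w).val : ZMod n)))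
          = ZMod.castHom hpn (ZMod p) (f (z + w)) := by
        intro z w
        rw [← map_add]
        exact hφcomm (z + w)
      simp only
      rw [qmap_comm hmn hkerm x', qmap_comm hmn hkerm y',
        hφcomm2 y' (f x'), hφcomm2 x' (f y'), hφcomm x', hφcomm y',
        ← map_add, ← map_add]
      exact congrArg _ (hS x' y')
    have hconst := lemD (ordCompl[p] n) hm0 p hp hpm (qmap f hmn) htS htG
      (fun zz : ZMod (ordCompl[p] n) => ZMod.castHom hpn (ZMod p) (f ((zz.val : ZMod n)))) hSφ
      (ZMod.castHom hmn (ZMod (ordCompl[p] n)) x)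
      (ZMod.castHom hmn (ZMod (ordCompl[p] n)) y)
    rw [hφcomm x, hφcomm y] at hconst
    exact hconst

theorem gen_of_val {n : ℕ} (hn0 : n ≠ 0) {f : ZMod n → ZMod n} (hS : Scond n f)
    (hgen : Gencond n f) (k : ZMod n) : ∀ u : ZMod n, ∃ j : ℤ, j • (f k) = u := by
  haveI : NeZero n := ⟨hn0⟩
  have hcop : Nat.Coprime (f k).val n := by
    rw [Nat.Coprime]
    by_contra hne
    obtain ⟨p, hp, hpd⟩ := Nat.exists_prime_and_dvd hne
    have hpn : p ∣ n := hpd.trans (Nat.gcd_dvd_right _ _)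
    have hpc : p ∣ (f k).val := hpd.trans (Nat.gcd_dvd_left _ _)
    haveI := Fact.mk hp
    haveI : NeZero p := ⟨hp.ne_zero⟩
    have h0 : ZMod.castHom hpn (ZMod p) (f k) = 0 := by
      rw [castHom_zero_iff hpn]
      exact hpc
    have hall : ∀ z : ZMod n, ZMod.castHom hpn (ZMod p) (f z) = 0 := fun z =>
      (core n hn0 f hS hgen p hp hpn z k).trans h0
    have hle : AddSubgroup.closure (Set.range f) ≤
        AddMonoidHom.ker (ZMod.castHom hpn (ZMod p)).toAddMonoidHom := by
      rw [AddSubgroup.closure_le]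
      rintro - ⟨z, rfl⟩
      exact hall z
    rw [hgen] at hle
    have h2 : ZMod.castHom hpn (ZMod p) (1 : ZMod n) = 0 :=
      hle (AddSubgroup.mem_top _)
    rw [map_one] at h2
    exact one_ne_zero h2
  intro u
  refine ⟨(u.val : ℤ) * Nat.gcdA (f k).val n, ?_⟩
  have hb' : (1 : ℤ) = ((f k).val : ℤ) * Nat.gcdA (f k).val n
      + (n : ℤ) * Nat.gcdB (f k).val n := by
    have h := Nat.gcd_eq_gcd_ab (f k).val n
    rwa [Nat.Coprime.gcd_eq_one hcop, Nat.cast_one] at h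
  have h1 : ((Nat.gcdA (f k).val n : ℤ) : ZMod n) * (f k) = 1 := by
    have h2 := congrArg (fun z : ℤ => ((z : ZMod n))) hb'
    push_cast at h2
    rw [ZMod.natCast_self, zero_mul, add_zero] at h2
    have hcv : (((f k).val : ℕ) : ZMod n) = f k := ZMod.natCast_rightInverse (f k)
    rw [hcv] at h2
    rw [mul_comm]
    exact h2.symm
  rw [zsmul_eq_mul]
  push_cast
  calc ((u.val : ZMod n) * ((Nat.gcdA (f k).val n : ℤ) : ZMod n)) * (f k)
      = (u.val : ZMod n) * (((Nat.gcdA (f k).val n : ℤ) : ZMod n) * (f k)) := by ring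
    _ = (u.val : ZMod n) := by rw [h1, mul_one]
    _ = u := ZMod.natCast_rightInverse u

end Stmt1Aux

/-- In a finite indecomposable cycle set with cyclic permutation group,
every `σ_x` generates the whole permutation group. -/
theorem stmt1 {X : Type} [Finite X] (C : CycleSet X)
    (hind : C.Indecomposable) (hcyc : IsCyclic C.G) :
    ∀ x : X, Subgroup.zpowers (C.sigma x) = C.G := by
  classical
  intro x
  obtain ⟨g, hg⟩ := hcyc.exists_generator
  have hcomm : ∀ a b : C.G, a * b = b * a := by
    intro a b
    obtain ⟨k, hk⟩ := hg a
    obtain ⟨l, hl⟩ := hg b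
    rw [← hk, ← hl, ← zpow_add, ← zpow_add, add_comm]
  have hmem : ∀ y : X, C.sigma y ∈ C.G := fun y => Subgroup.subset_closure ⟨y, rfl⟩
  set sg : X → C.G := fun y => ⟨C.sigma y, hmem y⟩ with hsgdef
  have hΦsurj : ∀ y : X, ∃ hG : C.G, (hG : Equiv.Perm X) x = y := by
    intro y
    obtain ⟨kp, hkG, hkz⟩ := hind x y
    exact ⟨⟨kp, hkG⟩, hkz⟩
  have hSG : ∀ u v : X, sg (C.mul u v) * sg u = sg (C.mul v u) * sg v := by
    intro u v
    apply Subtype.ext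
    apply Equiv.ext
    intro z
    exact C.cycloid u v z
  -- the group is finite and nontrivial-or-not; set n
  have hn0 : Nat.card C.G ≠ 0 := Nat.card_pos.ne'
  haveI : NeZero (Nat.card C.G) := ⟨hn0⟩
  have horder : orderOf g = Nat.card C.G := orderOf_eq_card_of_forall_mem_zpowers hg
  set eh : ZMod (Nat.card C.G) → C.G := fun k => g ^ k.val with hehdef
  have heh0 : eh 0 = 1 := by
    show g ^ (0 : ZMod (Nat.card C.G)).val = 1
    rw [ZMod.val_zero, pow_zero]
  have hehadd : ∀ a b : ZMod (Nat.card C.G), eh (a + b) = eh a * eh b := by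
    intro a b
    show g ^ (a + b).val = g ^ a.val * g ^ b.val
    have hmod := pow_mod_orderOf g (a.val + b.val)
    rw [horder] at hmod
    rw [ZMod.val_add, hmod, pow_add]
  have hehsurj : Function.Surjective eh := by
    intro h
    obtain ⟨z, hz⟩ := hg h
    refine ⟨((z : ℤ) : ZMod (Nat.card C.G)), ?_⟩
    show g ^ (((z : ℤ) : ZMod (Nat.card C.G))).val = h
    rw [← hz]
    have h1 : ((((z : ℤ) : ZMod (Nat.card C.G))).val : ℤ) = z % ((Nat.card C.G : ℕ) : ℤ) :=
      ZMod.val_intCast z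
    have h2 : g ^ ((Nat.card C.G : ℕ) : ℤ) = 1 := by
      rw [zpow_natCast, ← horder, pow_orderOf_eq_one]
    calc g ^ (((z : ℤ) : ZMod (Nat.card C.G))).val
        = g ^ ((((z : ℤ) : ZMod (Nat.card C.G))).val : ℤ) := (zpow_natCast g _).symm
      _ = g ^ (z % ((Nat.card C.G : ℕ) : ℤ)) := by rw [h1]
      _ = g ^ (z % ((Nat.card C.G : ℕ) : ℤ))
          * (g ^ ((Nat.card C.G : ℕ) : ℤ)) ^ (z / ((Nat.card C.G : ℕ) : ℤ)) := by
          rw [h2, one_zpow, mul_one]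
      _ = g ^ (z % ((Nat.card C.G : ℕ) : ℤ)
          + ((Nat.card C.G : ℕ) : ℤ) * (z / ((Nat.card C.G : ℕ) : ℤ))) := by
          rw [zpow_add, zpow_mul]
      _ = g ^ z := by rw [Int.emod_add_mul_ediv]
  have hehbij : Function.Bijective eh :=
    (Nat.bijective_iff_surjective_and_card eh).mpr ⟨hehsurj, Nat.card_zmod _⟩
  set ehE := Equiv.ofBijective eh hehbij with hehEdef
  have hehsymm : ∀ h : C.G, eh (ehE.symm h) = h := fun h => ehE.apply_symm_apply h
  have hneg : ∀ k : ZMod (Nat.card C.G), eh (-k) = (eh k)⁻¹ := by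
    intro k
    have h3 : eh k * eh (-k) = 1 := by
      rw [← hehadd]
      rw [add_neg_cancel, heh0]
    exact eq_inv_of_mul_eq_one_right h3
  set F : C.G → C.G := fun h => sg ((h : Equiv.Perm X) x) with hFdef
  set f : ZMod (Nat.card C.G) → ZMod (Nat.card C.G) := fun k => ehE.symm (F (eh k)) with hfdef
  have hehf : ∀ k, eh (f k) = F (eh k) := fun k => hehsymm _
  have hFS : ∀ a b : C.G, F (b * F a) * F a = F (a * F b) * F b := by
    intro a b
    have h1 : ((b * F a : C.G) : Equiv.Perm X) x
        = C.mul ((a : Equiv.Perm X) x) ((b : Equiv.Perm X) x) := by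
      rw [hcomm b (F a)]
      rfl
    have h2 : ((a * F b : C.G) : Equiv.Perm X) x
        = C.mul ((b : Equiv.Perm X) x) ((a : Equiv.Perm X) x) := by
      rw [hcomm a (F b)]
      rfl
    show sg ((( b * F a : C.G) : Equiv.Perm X) x) * F a
        = sg (((a * F b : C.G) : Equiv.Perm X) x) * F b
    rw [h1, h2]
    exact hSG _ _
  have hfS : Stmt1Aux.Scond (Nat.card C.G) f := by
    intro k l
    apply hehbij.injective
    simp only [hehadd, hehf]
    exact hFS (eh k) (eh l)
  have hfG : Stmt1Aux.Gencond (Nat.card C.G) f := by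
    have htop : ∀ h : C.G, h ∈ Subgroup.closure (Set.range sg) := by
      intro h
      have h1 : Subgroup.closure (((↑) : C.G → Equiv.Perm X) ⁻¹' (Set.range C.sigma)) = ⊤ :=
        Subgroup.closure_closure_coe_preimage
      have h2 : Set.range sg = (((↑) : C.G → Equiv.Perm X) ⁻¹' (Set.range C.sigma)) := by
        ext h'
        constructor
        · rintro ⟨y, rfl⟩
          exact ⟨y, rfl⟩
        · rintro ⟨y, hy⟩
          exact ⟨y, Subtype.ext hy⟩
      rw [h2, h1]
      trivial
    have pull : ∀ h : C.G, h ∈ Subgroup.closure (Set.range sg) →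
        ehE.symm h ∈ AddSubgroup.closure (Set.range f) := by
      intro h hh
      induction hh using Subgroup.closure_induction with
      | mem h' hh' =>
        obtain ⟨y, rfl⟩ := hh'
        obtain ⟨hG, hGy⟩ := hΦsurj y
        have hfy : f (ehE.symm hG) = ehE.symm (sg y) := by
          show ehE.symm (F (eh (ehE.symm hG))) = ehE.symm (sg y)
          rw [hehsymm]
          show ehE.symm (sg ((hG : Equiv.Perm X) x)) = ehE.symm (sg y)
          rw [hGy]
        exact AddSubgroup.subset_closure ⟨ehE.symm hG, hfy⟩
      | one =>
        have h0 : ehE.symm 1 = 0 := by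
          apply hehbij.injective
          rw [hehsymm, heh0]
        rw [h0]
        exact AddSubgroup.zero_mem _
      | mul a b ha hb iha ihb =>
        have hab : ehE.symm (a * b) = ehE.symm a + ehE.symm b := by
          apply hehbij.injective
          rw [hehsymm, hehadd, hehsymm, hehsymm]
        rw [hab]
        exact AddSubgroup.add_mem _ iha ihb
      | inv a ha iha =>
        have hai : ehE.symm a⁻¹ = - ehE.symm a := by
          apply hehbij.injective
          rw [hehsymm, hneg, hehsymm]
        rw [hai]
        exact AddSubgroup.neg_mem _ iha
    show AddSubgroup.closure (Set.range f) = ⊤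
    rw [eq_top_iff]
    intro c _
    have hpc := pull (eh c) (htop (eh c))
    have h4 : ehE.symm (eh c) = c := ehE.symm_apply_apply c
    rwa [h4] at hpc
  have hgen' := Stmt1Aux.gen_of_val hn0 hfS hfG 0
  have hF1 : eh (f 0) = sg x := by
    rw [hehf 0, heh0]
    rfl
  have hzsmul : ∀ (j : ℤ) (v : ZMod (Nat.card C.G)), eh (j • v) = (eh v) ^ j := by
    intro j v
    induction j using Int.induction_on with
    | zero => simpa using heh0
    | succ i ih =>
      have e : ((i : ℤ) + 1) • v = (i : ℤ) • v + v := by rw [add_zsmul, one_zsmul]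
      rw [e, hehadd, ih, ← zpow_add_one]
    | pred i ih =>
      have e : (-(i : ℤ) - 1) • v = (-(i : ℤ)) • v + (-v) := by
        rw [sub_zsmul, one_zsmul]
      rw [e, hehadd, ih, hneg, ← zpow_sub_one]
  apply le_antisymm
  · rw [Subgroup.zpowers_le]
    exact hmem x
  · intro u hu
    obtain ⟨j, hj⟩ := hgen' (ehE.symm ⟨u, hu⟩)
    have h5 : (⟨u, hu⟩ : C.G) = (sg x) ^ j := by
      have h6 : eh (j • f 0) = eh (ehE.symm ⟨u, hu⟩) := congrArg eh hj
      rw [hzsmul, hF1, hehsymm] at h6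
      exact h6.symm
    have h7 : u = (C.sigma x) ^ j := by
      have h8 := congrArg (Subtype.val) h5
      rw [SubgroupClass.coe_zpow] at h8
      exact h8
    exact Subgroup.mem_zpowers_iff.mpr ⟨j, h7.symm⟩
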